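/- Let X be a closed subset of a metric space M, Y a closed subset of a metric space N, and f : M∖X → N∖Y a continuous map. Then the following are equivalent: (1) for every open set U ⊆ N with Y ⊆ U there exists an open set V ⊆ M with X ⊆ V such that f(V∖X) ⊆ U∖Y; (2) for every compact K ⊆ M there exists a compact L ⊆ N with f(K∖X) ⊆ L∖Y, and moreover for every compact K ⊆ M the restriction of f to K∖X is a proper map into N∖Y (i.e., for every compact Q ⊆ N∖Y the set {x ∈ K∖X : f(x) ∈ Q} is compact). -/

import Mathlib

open Filter Topology Set

/-- If `a` is in the closure of the range of `v` but not in the range, some subsequence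
of `v` tends to `a`. -/
lemma subseq_of_mem_closure_range {α : Type*} [MetricSpace α] {v : ℕ → α} {a : α}
    (h1 : a ∈ closure (Set.range v)) (h2 : a ∉ Set.range v) :
    ∃ ψ : ℕ → ℕ, StrictMono ψ ∧ Tendsto (v ∘ ψ) atTop (𝓝 a) := by
  apply TopologicalSpace.FirstCountableTopology.tendsto_subseq
  rw [mapClusterPt_iff_frequently]
  intro s hs
  rw [Filter.frequently_atTop]
  intro N
  have htail : a ∈ closure (v '' Set.Ici N) := by
    have hsplit : Set.range v = v '' Set.Iio N ∪ v '' Set.Ici N := by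
      rw [← Set.image_union, Set.Iio_union_Ici, Set.image_univ]
    rw [hsplit, closure_union] at h1
    rcases h1 with h | h
    · rw [(((Set.finite_Iio N).image v).isClosed).closure_eq] at h
      exact absurd (Set.image_subset_range _ _ h) h2
    · exact h
  rcases mem_closure_iff_nhds.mp htail s hs with ⟨y, hys, ⟨n, hn, rfl⟩⟩
  exact ⟨n, hn, hys⟩

/-- If every sequence in `s` has a convergent subsequence, then `closure s` is compact. -/
lemma isCompact_closure_of_subseq {α : Type*} [MetricSpace α] {s : Set α}
    (h : ∀ u : ℕ → α, (∀ n, u n ∈ s) →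
      ∃ a, ∃ φ : ℕ → ℕ, StrictMono φ ∧ Tendsto (u ∘ φ) atTop (𝓝 a)) :
    IsCompact (closure s) := by
  apply IsSeqCompact.isCompact
  intro w hw
  have hz : ∀ n : ℕ, ∃ b ∈ s, dist (w n) b < 1 / (n + 1) := by
    intro n
    exact Metric.mem_closure_iff.mp (hw n) _ (by positivity)
  choose z hzs hzd using hz
  obtain ⟨a, φ, hφ, hconv⟩ := h z hzs
  refine ⟨a, ?_, φ, hφ, ?_⟩
  · exact mem_closure_of_tendsto hconv (Eventually.of_forall fun n => hzs (φ n))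
  · rw [tendsto_iff_dist_tendsto_zero]
    have h1 : Tendsto (fun n : ℕ => 1 / ((φ n : ℝ) + 1) + dist (z (φ n)) a) atTop (𝓝 0) := by
      have := (tendsto_one_div_add_atTop_nhds_zero_nat (𝕜 := ℝ)).comp hφ.tendsto_atTop
      have hd := (tendsto_iff_dist_tendsto_zero.mp hconv)
      simpa using this.add hd
    apply squeeze_zero (fun n => dist_nonneg) _ h1
    intro n
    calc dist ((w ∘ φ) n) a ≤ dist (w (φ n)) (z (φ n)) + dist (z (φ n)) a := dist_triangle _ _ _
      _ ≤ 1 / ((φ n : ℝ) + 1) + dist (z (φ n)) a := by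
          exact add_le_add (le_of_lt (hzd (φ n))) le_rfl

theorem stmt2 {M N : Type*} [MetricSpace M] [MetricSpace N] (X : Set M) (Y : Set N)
    (hX : IsClosed X) (hY : IsClosed Y)
    (f : (Xᶜ : Set M) → (Yᶜ : Set N)) (hf : Continuous f) :
    (∀ U : Set N, IsOpen U → Y ⊆ U →
        ∃ V : Set M, IsOpen V ∧ X ⊆ V ∧
          ∀ x : (Xᶜ : Set M), (x : M) ∈ V → (f x : N) ∈ U \ Y)
      ↔
    ((∀ K : Set M, IsCompact K →
        ∃ L : Set N, IsCompact L ∧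
          ∀ x : (Xᶜ : Set M), (x : M) ∈ K → (f x : N) ∈ L \ Y) ∧
      (∀ K : Set M, IsCompact K → ∀ Q : Set N, Q ⊆ Yᶜ → IsCompact Q →
        IsCompact {x : (Xᶜ : Set M) | (x : M) ∈ K ∧ (f x : N) ∈ Q})) := by
  constructor
  · intro h1
    constructor
    · -- (a): image of K ∖ X is contained in a compact set
      intro K hK
      set img : Set N := (fun x => (f x : N)) '' {x : (Xᶜ : Set M) | (x : M) ∈ K} with himg
      refine ⟨closure img, ?_, ?_⟩
      · apply isCompact_closure_of_subseq
        intro u hu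
        have hu' : ∀ n, ∃ x : (Xᶜ : Set M), (x : M) ∈ K ∧ (f x : N) = u n := by
          intro n; rcases hu n with ⟨x, hx, hfx⟩; exact ⟨x, hx, hfx⟩
        choose x hxK hfx using hu'
        obtain ⟨p, hpK, φ, hφ, hconv⟩ := hK.tendsto_subseq (x := fun n => (x n : M)) hxK
        by_cases hp : p ∈ X
        · -- no convergent subsequence would contradict (1)
          by_contra hno
          push_neg at hno
          have hYT : ∀ a ∈ Y, a ∉ closure (Set.range (u ∘ φ)) := by
            intro a ha hcl
            have hnr : a ∉ Set.range (u ∘ φ) := by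
              rintro ⟨n, rfl⟩
              exact (f (x (φ n))).2 (by rw [Function.comp_apply, ← hfx (φ n)] at ha; exact ha)
            obtain ⟨ψ, hψ, htend⟩ := subseq_of_mem_closure_range hcl hnr
            exact hno a (φ ∘ ψ) (hφ.comp hψ) htend
          obtain ⟨V, hV, hXV, hfV⟩ := h1 (closure (Set.range (u ∘ φ)))ᶜ
            isClosed_closure.isOpen_compl (fun a ha => hYT a ha)
          have hev : ∀ᶠ n in atTop, ((x (φ n)) : M) ∈ V :=
            hconv (hV.mem_nhds (hXV hp))
          rcases hev.exists with ⟨n, hn⟩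
          have := (hfV (x (φ n)) hn).1
          rw [hfx (φ n)] at this
          exact this (subset_closure ⟨n, rfl⟩)
        · refine ⟨(f ⟨p, hp⟩ : N), φ, hφ, ?_⟩
          have hsub : Tendsto (fun n => x (φ n)) atTop (𝓝 (⟨p, hp⟩ : (Xᶜ : Set M))) :=
            tendsto_subtype_rng.mpr hconv
          have : Tendsto (fun n => (f (x (φ n)) : N)) atTop (𝓝 (f ⟨p, hp⟩ : N)) :=
            ((continuous_subtype_val.comp hf).continuousAt (x := (⟨p, hp⟩ : (Xᶜ : Set M)))).tendsto.comp hsub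
          convert this using 1
          funext n
          exact (hfx (φ n)).symm
      · intro x hx
        exact ⟨subset_closure ⟨x, hx, rfl⟩, (f x).2⟩
    · -- (b): properness on compact sets
      intro K hK Q hQY hQ
      apply IsSeqCompact.isCompact
      intro u hu
      obtain ⟨p, hpK, φ, hφ, hconv⟩ := hK.tendsto_subseq (x := fun n => (u n : M))
        (fun n => (hu n).1)
      have hp : p ∈ Xᶜ := by
        intro hpX
        obtain ⟨V, hV, hXV, hfV⟩ := h1 Qᶜ hQ.isClosed.isOpen_compl
          (Set.subset_compl_comm.mp hQY)
        have hev : ∀ᶠ n in atTop, ((u (φ n)) : M) ∈ V := hconv (hV.mem_nhds (hXV hpX))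
        rcases hev.exists with ⟨n, hn⟩
        exact (hfV (u (φ n)) hn).1 (hu (φ n)).2
      have hsub : Tendsto (u ∘ φ) atTop (𝓝 (⟨p, hp⟩ : (Xᶜ : Set M))) :=
        tendsto_subtype_rng.mpr hconv
      refine ⟨⟨p, hp⟩, ⟨hpK, ?_⟩, φ, hφ, hsub⟩
      have htend : Tendsto (fun n => (f (u (φ n)) : N)) atTop (𝓝 (f ⟨p, hp⟩ : N)) :=
        ((continuous_subtype_val.comp hf).continuousAt (x := (⟨p, hp⟩ : (Xᶜ : Set M)))).tendsto.comp hsub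
      exact hQ.isClosed.mem_of_tendsto htend (Eventually.of_forall fun n => (hu (φ n)).2)
  · rintro ⟨h2a, h2b⟩ U hU hYU
    set W : Set M := {m : M | ∀ h : m ∈ Xᶜ, (f ⟨m, h⟩ : N) ∈ U} with hW
    by_cases hXW : X ⊆ interior W
    · refine ⟨interior W, isOpen_interior, hXW, ?_⟩
      intro x hx
      have hxW : (x : M) ∈ W := interior_subset hx
      refine ⟨by simpa using hxW x.2, (f x).2⟩
    · exfalso
      obtain ⟨x₀, hx₀X, hx₀W⟩ := Set.not_subset.mp hXW
      have hseq : ∀ n : ℕ, ∃ x : M, dist x x₀ < 1 / (n + 1) ∧ x ∉ W := by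
        intro n
        by_contra hc
        push_neg at hc
        apply hx₀W
        apply (Metric.isOpen_ball.subset_interior_iff ..).mpr ?_
          (Metric.mem_ball_self (by positivity : (0:ℝ) < 1 / (n+1)))
        intro y hy
        exact hc y (by simpa [Metric.mem_ball] using hy)
      choose x hxd hxW using hseq
      have htend : Tendsto x atTop (𝓝 x₀) := by
        rw [tendsto_iff_dist_tendsto_zero]
        exact squeeze_zero (fun n => dist_nonneg) (fun n => le_of_lt (hxd n))
          tendsto_one_div_add_atTop_nhds_zero_nat
      have hmem : ∀ n, ∃ h : x n ∈ Xᶜ, (f ⟨x n, h⟩ : N) ∉ U := by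
        intro n
        have := hxW n
        rw [hW, Set.mem_setOf_eq] at this
        push_neg at this
        exact this
      choose hxX hfU using hmem
      set K : Set M := insert x₀ (Set.range x) with hK
      have hKc : IsCompact K := htend.isCompact_insert_range
      obtain ⟨L, hL, hLmem⟩ := h2a K hKc
      have hQc : IsCompact (L ∩ Uᶜ) := hL.inter_right hU.isClosed_compl
      have hQY : L ∩ Uᶜ ⊆ Yᶜ := fun q hq hqY => hq.2 (hYU hqY)
      have hS := h2b K hKc (L ∩ Uᶜ) hQY hQc
      set u : ℕ → (Xᶜ : Set M) := fun n => ⟨x n, hxX n⟩ with hu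
      have huS : ∀ n, u n ∈ {x : (Xᶜ : Set M) | (x : M) ∈ K ∧ (f x : N) ∈ L ∩ Uᶜ} := by
        intro n
        have hxK : (u n : M) ∈ K := Set.subset_insert _ _ (Set.mem_range_self n)
        exact ⟨hxK, (hLmem (u n) hxK).1, hfU n⟩
      obtain ⟨a, haS, φ, hφ, hconv⟩ := hS.tendsto_subseq huS
      have hvals : Tendsto (fun n => ((u (φ n)) : M)) atTop (𝓝 (a : M)) :=
        tendsto_subtype_rng.mp hconv
      have hvals' : Tendsto (fun n => ((u (φ n)) : M)) atTop (𝓝 x₀) :=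
        htend.comp hφ.tendsto_atTop
      have : (a : M) = x₀ := tendsto_nhds_unique hvals hvals'
      exact a.2 (this ▸ hx₀X)
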